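/- arXiv:1910.04385 — 4 statements merged into one kernel-verified Lean document; each statement's English description precedes it below -/
import Mathlib

section
/- Let X be a measurable space, g : X → ℝ a measurable function, ℓ : ℝ → ℝ a measurable margin loss, and θ, θ' ∈ [0,1]. Assume the function (x,x') ↦ ℓ(g(x) − g(x')) is integrable with respect to all four product measures P×P, P×N, N×P and N×N. Then the corrupted AUC risk decomposes as R_corr^ℓ(g) = (θ − θ')·R_AUC^ℓ(g) + (1−θ)θ'·E_{x~P}E_{x'~N}[φ(x,x')] + (θθ'/2)·E_{x~P}E_{x'~P}[φ(x,x')] + ((1−θ)(1−θ')/2)·E_{x~N}E_{x'~N}[φ(x,x')], where φ(x,x') = ℓ(g(x) − g(x')) + ℓ(g(x') − g(x)). -/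
open MeasureTheory

/-- The corrupted (mixture) distribution `θ·P + (1−θ)·N`. -/
noncomputable def mix {X : Type*} [MeasurableSpace X] (P N : Measure X) (θ : ℝ) : Measure X :=
  ENNReal.ofReal θ • P + ENNReal.ofReal (1 - θ) • N

/-- Splitting the iterated integral of the symmetrized loss into the two iterated integrals. -/
lemma pair_split {X : Type*} [MeasurableSpace X] (μ ν : Measure X) [SFinite μ] [SFinite ν]
    (g : X → ℝ) (ℓ : ℝ → ℝ)
    (h1 : Integrable (fun p : X × X => ℓ (g p.1 - g p.2)) (μ.prod ν))
    (h2 : Integrable (fun p : X × X => ℓ (g p.1 - g p.2)) (ν.prod μ)) :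
    ∫ x, ∫ x', (ℓ (g x - g x') + ℓ (g x' - g x)) ∂ν ∂μ
      = (∫ x, ∫ x', ℓ (g x - g x') ∂ν ∂μ) + (∫ x, ∫ x', ℓ (g x - g x') ∂μ ∂ν) := by
  have hs : Integrable (fun p : X × X => ℓ (g p.1 - g p.2) + ℓ (g p.2 - g p.1)) (μ.prod ν) :=
    h1.add h2.swap
  have e1 : ∫ x, ∫ x', (ℓ (g x - g x') + ℓ (g x' - g x)) ∂ν ∂μ
      = ∫ p : X × X, (ℓ (g p.1 - g p.2) + ℓ (g p.2 - g p.1)) ∂(μ.prod ν) :=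
    integral_integral hs
  have h2' : Integrable (fun p : X × X => ℓ (g p.2 - g p.1)) (μ.prod ν) := h2.swap
  rw [e1, integral_add h1 h2']
  congr 1
  · exact (integral_integral (f := fun x x' => ℓ (g x - g x')) h1).symm
  · have e2 : (∫ a : X × X, ℓ (g a.2 - g a.1) ∂(μ.prod ν))
        = ∫ a : X × X, ℓ (g a.1 - g a.2) ∂(ν.prod μ) :=
      integral_prod_swap (μ := ν) (ν := μ) (fun p : X × X => ℓ (g p.1 - g p.2))
    rw [e2]
    exact (integral_integral (f := fun x x' => ℓ (g x - g x')) h2).symm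

/-- Theorem 1 (decomposition of the corrupted AUC risk): for a measurable margin loss `ℓ`,
measurable scoring function `g`, and `θ, θ' ∈ [0,1]`, the corrupted AUC risk decomposes as
`(θ − θ')·R_AUC^ℓ(g)` plus the three excessive terms involving
`φ(x,x') = ℓ(g x − g x') + ℓ(g x' − g x)`. -/
theorem corrupted_auc_risk_decomposition
    {X : Type*} [MeasurableSpace X] (P N : Measure X)
    [IsProbabilityMeasure P] [IsProbabilityMeasure N]
    (g : X → ℝ) (hg : Measurable g) (ℓ : ℝ → ℝ) (hℓ : Measurable ℓ)
    (θ θ' : ℝ) (hθ : θ ∈ Set.Icc (0 : ℝ) 1) (hθ' : θ' ∈ Set.Icc (0 : ℝ) 1)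
    (hPP : Integrable (fun p : X × X => ℓ (g p.1 - g p.2)) (P.prod P))
    (hPN : Integrable (fun p : X × X => ℓ (g p.1 - g p.2)) (P.prod N))
    (hNP : Integrable (fun p : X × X => ℓ (g p.1 - g p.2)) (N.prod P))
    (hNN : Integrable (fun p : X × X => ℓ (g p.1 - g p.2)) (N.prod N)) :
    (∫ x, ∫ x', ℓ (g x - g x') ∂(mix P N θ') ∂(mix P N θ)) =
      (θ - θ') * (∫ x, ∫ x', ℓ (g x - g x') ∂N ∂P)
      + (1 - θ) * θ' * (∫ x, ∫ x', (ℓ (g x - g x') + ℓ (g x' - g x)) ∂N ∂P)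
      + θ * θ' / 2 * (∫ x, ∫ x', (ℓ (g x - g x') + ℓ (g x' - g x)) ∂P ∂P)
      + (1 - θ) * (1 - θ') / 2 *
          (∫ x, ∫ x', (ℓ (g x - g x') + ℓ (g x' - g x)) ∂N ∂N) := by
  obtain ⟨hθ0, hθ1⟩ := hθ
  obtain ⟨hθ'0, hθ'1⟩ := hθ'
  have hb : (0:ℝ) ≤ 1 - θ := by linarith
  have hd : (0:ℝ) ≤ 1 - θ' := by linarith
  -- inner integral splitting, a.e. with respect to P and N
  have inner_P : ∀ᵐ x ∂P, (∫ x', ℓ (g x - g x') ∂(mix P N θ')) =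
      θ' * (∫ x', ℓ (g x - g x') ∂P) + (1 - θ') * (∫ x', ℓ (g x - g x') ∂N) := by
    filter_upwards [hPP.prod_right_ae, hPN.prod_right_ae] with x h1 h2
    simp only [mix]
    rw [integral_add_measure (h1.smul_measure ENNReal.ofReal_ne_top)
        (h2.smul_measure ENNReal.ofReal_ne_top),
      integral_smul_measure, integral_smul_measure,
      ENNReal.toReal_ofReal hθ'0, ENNReal.toReal_ofReal hd, smul_eq_mul, smul_eq_mul]
  have inner_N : ∀ᵐ x ∂N, (∫ x', ℓ (g x - g x') ∂(mix P N θ')) =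
      θ' * (∫ x', ℓ (g x - g x') ∂P) + (1 - θ') * (∫ x', ℓ (g x - g x') ∂N) := by
    filter_upwards [hNP.prod_right_ae, hNN.prod_right_ae] with x h1 h2
    simp only [mix]
    rw [integral_add_measure (h1.smul_measure ENNReal.ofReal_ne_top)
        (h2.smul_measure ENNReal.ofReal_ne_top),
      integral_smul_measure, integral_smul_measure,
      ENNReal.toReal_ofReal hθ'0, ENNReal.toReal_ofReal hd, smul_eq_mul, smul_eq_mul]
  -- integrability of the outer integrand
  have hcombP : Integrable (fun x => θ' * (∫ x', ℓ (g x - g x') ∂P)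
      + (1 - θ') * (∫ x', ℓ (g x - g x') ∂N)) P :=
    (hPP.integral_prod_left.const_mul θ').add (hPN.integral_prod_left.const_mul (1 - θ'))
  have hcombN : Integrable (fun x => θ' * (∫ x', ℓ (g x - g x') ∂P)
      + (1 - θ') * (∫ x', ℓ (g x - g x') ∂N)) N :=
    (hNP.integral_prod_left.const_mul θ').add (hNN.integral_prod_left.const_mul (1 - θ'))
  have houtP : Integrable (fun x => ∫ x', ℓ (g x - g x') ∂(mix P N θ')) P :=
    hcombP.congr (inner_P.mono fun x hx => hx.symm)
  have houtN : Integrable (fun x => ∫ x', ℓ (g x - g x') ∂(mix P N θ')) N :=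
    hcombN.congr (inner_N.mono fun x hx => hx.symm)
  -- split the outer integral over the mixture
  have outer : (∫ x, ∫ x', ℓ (g x - g x') ∂(mix P N θ') ∂(mix P N θ)) =
      θ * (∫ x, ∫ x', ℓ (g x - g x') ∂(mix P N θ') ∂P)
      + (1 - θ) * (∫ x, ∫ x', ℓ (g x - g x') ∂(mix P N θ') ∂N) := by
    show (∫ x, ∫ x', ℓ (g x - g x') ∂(mix P N θ') ∂(ENNReal.ofReal θ • P
        + ENNReal.ofReal (1 - θ) • N)) = _
    rw [integral_add_measure (houtP.smul_measure ENNReal.ofReal_ne_top)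
        (houtN.smul_measure ENNReal.ofReal_ne_top),
      integral_smul_measure, integral_smul_measure,
      ENNReal.toReal_ofReal hθ0, ENNReal.toReal_ofReal hb, smul_eq_mul, smul_eq_mul]
  have intP : (∫ x, ∫ x', ℓ (g x - g x') ∂(mix P N θ') ∂P) =
      θ' * (∫ x, ∫ x', ℓ (g x - g x') ∂P ∂P) + (1 - θ') * (∫ x, ∫ x', ℓ (g x - g x') ∂N ∂P) := by
    rw [integral_congr_ae inner_P,
      integral_add (hPP.integral_prod_left.const_mul θ') (hPN.integral_prod_left.const_mul (1 - θ')),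
      integral_const_mul, integral_const_mul]
  have intN : (∫ x, ∫ x', ℓ (g x - g x') ∂(mix P N θ') ∂N) =
      θ' * (∫ x, ∫ x', ℓ (g x - g x') ∂P ∂N) + (1 - θ') * (∫ x, ∫ x', ℓ (g x - g x') ∂N ∂N) := by
    rw [integral_congr_ae inner_N,
      integral_add (hNP.integral_prod_left.const_mul θ') (hNN.integral_prod_left.const_mul (1 - θ')),
      integral_const_mul, integral_const_mul]
  rw [outer, intP, intN,
    pair_split P N g ℓ hPN hNP, pair_split P P g ℓ hPP hPP, pair_split N N g ℓ hNN hNN]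
  ring
end

section
/- Let X be a measurable space, g : X → ℝ a measurable function, θ, θ' ∈ [0,1], and let ℓ_sym : ℝ → ℝ be a measurable symmetric loss with constant K > 0 taking values in [0,K]. Then the corrupted AUC risk is an affine transformation of the clean AUC risk: R_corr^{ℓ_sym}(g) = (θ − θ')·R_AUC^{ℓ_sym}(g) + K·(1 − θ + θ')/2. -/
open MeasureTheory

lemma integral_mix_eq {X : Type*} [MeasurableSpace X] (μ ν : Measure X)
    [IsFiniteMeasure μ] [IsFiniteMeasure ν]
    (h : X → ℝ) (hm : StronglyMeasurable h) (C : ℝ) (hb : ∀ x, ‖h x‖ ≤ C)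
    (θ : ℝ) (hθ0 : 0 ≤ θ) (hθ1 : θ ≤ 1) :
    ∫ x, h x ∂(mix μ ν θ) = θ * ∫ x, h x ∂μ + (1 - θ) * ∫ x, h x ∂ν := by
  have hiμ : Integrable h μ :=
    (integrable_const C).mono' hm.aestronglyMeasurable (Filter.Eventually.of_forall hb)
  have hiν : Integrable h ν :=
    (integrable_const C).mono' hm.aestronglyMeasurable (Filter.Eventually.of_forall hb)
  rw [mix, integral_add_measure (hiμ.smul_measure ENNReal.ofReal_ne_top)
      (hiν.smul_measure ENNReal.ofReal_ne_top),
    integral_smul_measure, integral_smul_measure,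
    ENNReal.toReal_ofReal hθ0, ENNReal.toReal_ofReal (by linarith : (0:ℝ) ≤ 1 - θ)]
  simp [smul_eq_mul]

/-- Theorem 2: for a measurable symmetric loss `ℓ` with constant `K > 0` taking values in
`[0,K]`, the corrupted AUC risk is an affine transformation of the clean AUC risk:
`R_corr^ℓ(g) = (θ − θ')·R_AUC^ℓ(g) + K·(1 − θ + θ')/2`. -/
theorem corrupted_auc_risk_symmetric_loss
    {X : Type*} [MeasurableSpace X] (P N : Measure X)
    [IsProbabilityMeasure P] [IsProbabilityMeasure N]
    (g : X → ℝ) (hg : Measurable g)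
    (ℓ : ℝ → ℝ) (hℓ : Measurable ℓ) (K : ℝ) (hK : 0 < K)
    (hsym : ∀ z : ℝ, ℓ z + ℓ (-z) = K)
    (hbound : ∀ z : ℝ, ℓ z ∈ Set.Icc (0 : ℝ) K)
    (θ θ' : ℝ) (hθ : θ ∈ Set.Icc (0 : ℝ) 1) (hθ' : θ' ∈ Set.Icc (0 : ℝ) 1) :
    (∫ x, ∫ x', ℓ (g x - g x') ∂(mix P N θ') ∂(mix P N θ)) =
      (θ - θ') * (∫ x, ∫ x', ℓ (g x - g x') ∂N ∂P) + K * (1 - θ + θ') / 2 := by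
  obtain ⟨hθ0, hθ1⟩ := hθ
  obtain ⟨hθ'0, hθ'1⟩ := hθ'
  -- basic facts about the integrand
  have hℓb : ∀ z : ℝ, ‖ℓ z‖ ≤ K := fun z =>
    abs_le.mpr ⟨by linarith [(hbound z).1], (hbound z).2⟩
  have hfmeas : StronglyMeasurable (fun p : X × X => ℓ (g p.1 - g p.2)) :=
    (hℓ.comp ((hg.comp measurable_fst).sub (hg.comp measurable_snd))).stronglyMeasurable
  have hfmeas' : StronglyMeasurable (fun p : X × X => ℓ (g p.2 - g p.1)) :=
    (hℓ.comp ((hg.comp measurable_snd).sub (hg.comp measurable_fst))).stronglyMeasurable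
  have hint : ∀ (μ ν : Measure X), IsFiniteMeasure μ → IsFiniteMeasure ν →
      Integrable (fun p : X × X => ℓ (g p.1 - g p.2)) (μ.prod ν) := by
    intro μ ν _ _
    exact (integrable_const K).mono' hfmeas.aestronglyMeasurable
      (Filter.Eventually.of_forall fun p => hℓb _)
  have hint' : ∀ (μ ν : Measure X), IsFiniteMeasure μ → IsFiniteMeasure ν →
      Integrable (fun p : X × X => ℓ (g p.2 - g p.1)) (μ.prod ν) := by
    intro μ ν _ _
    exact (integrable_const K).mono' hfmeas'.aestronglyMeasurable
      (Filter.Eventually.of_forall fun p => hℓb _)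
  -- measurability and bounds for inner integrals
  have hFmeas : ∀ (ν : Measure X), SFinite ν →
      StronglyMeasurable (fun x => ∫ x', ℓ (g x - g x') ∂ν) := by
    intro ν _
    exact hfmeas.integral_prod_right'
  have hFbound : ∀ (ν : Measure X), IsProbabilityMeasure ν →
      ∀ x, ‖∫ x', ℓ (g x - g x') ∂ν‖ ≤ K := by
    intro ν _ x
    calc ‖∫ x', ℓ (g x - g x') ∂ν‖ ≤ K * (ν Set.univ).toReal :=
          norm_integral_le_of_norm_le_const (Filter.Eventually.of_forall fun x' => hℓb _)
      _ = K := by simp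
  -- swap identity
  have hswap : ∀ (μ ν : Measure X), IsProbabilityMeasure μ → IsProbabilityMeasure ν →
      (∫ x, ∫ x', ℓ (g x - g x') ∂ν ∂μ) + (∫ x, ∫ x', ℓ (g x - g x') ∂μ ∂ν) = K := by
    intro μ ν hμ hν
    have hswap' : (∫ x, ∫ x', ℓ (g x' - g x) ∂ν ∂μ) = ∫ x', ∫ x, ℓ (g x' - g x) ∂μ ∂ν := by
      exact integral_integral_swap (f := fun x x' => ℓ (g x' - g x))
        (hint' μ ν inferInstance inferInstance)
    have key : ∀ x, (∫ x', ℓ (g x - g x') ∂ν) = K - ∫ x', ℓ (g x' - g x) ∂ν := by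
      intro x
      have hi : Integrable (fun x' => ℓ (g x' - g x)) ν :=
        (integrable_const K).mono'
          ((hℓ.comp ((hg.sub measurable_const))).aestronglyMeasurable)
          (Filter.Eventually.of_forall fun x' => hℓb _)
      have : (∫ x', ℓ (g x - g x') ∂ν) = ∫ x', (K - ℓ (g x' - g x)) ∂ν := by
        congr 1
        funext x'
        have := hsym (g x' - g x)
        have hneg : -(g x' - g x) = g x - g x' := by ring
        rw [hneg] at this
        linarith
      rw [this, integral_sub (integrable_const K) hi, integral_const]
      simp
    calc (∫ x, ∫ x', ℓ (g x - g x') ∂ν ∂μ) + (∫ x, ∫ x', ℓ (g x - g x') ∂μ ∂ν)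
        = (∫ x, (K - ∫ x', ℓ (g x' - g x) ∂ν) ∂μ) + (∫ x, ∫ x', ℓ (g x - g x') ∂μ ∂ν) := by
          congr 1
          exact integral_congr_ae (Filter.Eventually.of_forall key)
      _ = (K - ∫ x, ∫ x', ℓ (g x' - g x) ∂ν ∂μ) + (∫ x, ∫ x', ℓ (g x - g x') ∂μ ∂ν) := by
          congr 1
          have hiG : Integrable (fun x => ∫ x', ℓ (g x' - g x) ∂ν) μ := by
            refine (integrable_const K).mono'
              (hfmeas'.integral_prod_right').aestronglyMeasurable
              (Filter.Eventually.of_forall fun x => ?_)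
            calc ‖∫ x', ℓ (g x' - g x) ∂ν‖ ≤ K * (ν Set.univ).toReal :=
                  norm_integral_le_of_norm_le_const
                    (Filter.Eventually.of_forall fun x' => hℓb _)
              _ = K := by simp
          rw [integral_sub (integrable_const K) hiG, integral_const]
          simp
      _ = K := by
          rw [hswap']
          have : (∫ x', ∫ x, ℓ (g x' - g x) ∂μ ∂ν) = ∫ x, ∫ x', ℓ (g x - g x') ∂μ ∂ν := rfl
          rw [this]
          ring
  have hdiag : ∀ (μ : Measure X), IsProbabilityMeasure μ →
      (∫ x, ∫ x', ℓ (g x - g x') ∂μ ∂μ) = K / 2 := by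
    intro μ hμ
    have := hswap μ μ hμ hμ
    linarith
  set A := ∫ x, ∫ x', ℓ (g x - g x') ∂N ∂P with hA
  have hNP : (∫ x, ∫ x', ℓ (g x - g x') ∂P ∂N) = K - A := by
    have := hswap P N inferInstance inferInstance
    linarith
  have hPP := hdiag P inferInstance
  have hNN := hdiag N inferInstance
  -- expand inner integral over the mixture
  have hinner : ∀ x, (∫ x', ℓ (g x - g x') ∂(mix P N θ')) =
      θ' * (∫ x', ℓ (g x - g x') ∂P) + (1 - θ') * (∫ x', ℓ (g x - g x') ∂N) := by
    intro x
    exact integral_mix_eq P N _ ((hℓ.comp ((measurable_const.sub hg))).stronglyMeasurable)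
      K (fun x' => hℓb _) θ' hθ'0 hθ'1
  rw [integral_congr_ae (Filter.Eventually.of_forall hinner)]
  -- expand outer integral over the mixture
  have hmeasH : StronglyMeasurable (fun x =>
      θ' * (∫ x', ℓ (g x - g x') ∂P) + (1 - θ') * (∫ x', ℓ (g x - g x') ∂N)) := by
    exact ((hFmeas P inferInstance).const_mul θ').add ((hFmeas N inferInstance).const_mul (1 - θ'))
  have hboundH : ∀ x, ‖θ' * (∫ x', ℓ (g x - g x') ∂P) +
      (1 - θ') * (∫ x', ℓ (g x - g x') ∂N)‖ ≤ K := by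
    intro x
    calc ‖θ' * (∫ x', ℓ (g x - g x') ∂P) + (1 - θ') * (∫ x', ℓ (g x - g x') ∂N)‖
        ≤ ‖θ' * (∫ x', ℓ (g x - g x') ∂P)‖ + ‖(1 - θ') * (∫ x', ℓ (g x - g x') ∂N)‖ :=
          norm_add_le _ _
      _ ≤ θ' * K + (1 - θ') * K := by
          rw [norm_mul, norm_mul, Real.norm_of_nonneg hθ'0,
            Real.norm_of_nonneg (by linarith : (0:ℝ) ≤ 1 - θ')]
          exact add_le_add
            (mul_le_mul_of_nonneg_left (hFbound P inferInstance x) hθ'0)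
            (mul_le_mul_of_nonneg_left (hFbound N inferInstance x) (by linarith))
      _ = K := by ring
  rw [integral_mix_eq P N _ hmeasH K hboundH θ hθ0 hθ1]
  -- expand the two integrals over P and N by linearity
  have hiFP : ∀ (μ : Measure X), IsProbabilityMeasure μ →
      Integrable (fun x => ∫ x', ℓ (g x - g x') ∂P) μ := by
    intro μ _
    exact (integrable_const K).mono' (hFmeas P inferInstance).aestronglyMeasurable
      (Filter.Eventually.of_forall fun x => hFbound P inferInstance x)
  have hiFN : ∀ (μ : Measure X), IsProbabilityMeasure μ →
      Integrable (fun x => ∫ x', ℓ (g x - g x') ∂N) μ := by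
    intro μ _
    exact (integrable_const K).mono' (hFmeas N inferInstance).aestronglyMeasurable
      (Filter.Eventually.of_forall fun x => hFbound N inferInstance x)
  have expand : ∀ (μ : Measure X), IsProbabilityMeasure μ →
      (∫ x, (θ' * (∫ x', ℓ (g x - g x') ∂P) + (1 - θ') * (∫ x', ℓ (g x - g x') ∂N)) ∂μ) =
        θ' * (∫ x, ∫ x', ℓ (g x - g x') ∂P ∂μ) + (1 - θ') * (∫ x, ∫ x', ℓ (g x - g x') ∂N ∂μ) := by
    intro μ hμ
    rw [integral_add ((hiFP μ hμ).const_mul θ') ((hiFN μ hμ).const_mul (1 - θ')),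
      integral_const_mul, integral_const_mul]
  rw [expand P inferInstance, expand N inferInstance, hPP, hNN, hNP]
  ring
end

section
/- Let X be a measurable space, θ, θ' ∈ [0,1] with θ > θ', and let ℓ_sym be a measurable symmetric loss with constant K > 0 taking values in [0,K]. Let G be a nonempty class of measurable functions g : X → ℝ. Fix samples x_1,…,x_{n_CP} ∈ X and x'_1,…,x'_{n_CN} ∈ X and let R̂_corr^{ℓ_sym} be the empirical corrupted AUC risk on these samples. Suppose ĝ ∈ G minimizes R̂_corr^{ℓ_sym} over G, g* ∈ G minimizes the clean AUC risk R_AUC^{ℓ_sym} over G, and sup_{g ∈ G} |R_corr^{ℓ_sym}(g) − R̂_corr^{ℓ_sym}(g)| is finite. Then R_AUC^{ℓ_sym}(ĝ) − R_AUC^{ℓ_sym}(g*) ≤ (2/(θ − θ'))·sup_{g ∈ G} |R_corr^{ℓ_sym}(g) − R̂_corr^{ℓ_sym}(g)|. -/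
open MeasureTheory

/-- The clean AUC risk `R_AUC^ℓ(g) = E_{x~P} E_{x'~N} [ℓ(g x − g x')]`. -/
noncomputable def aucRisk {X : Type*} [MeasurableSpace X] (P N : Measure X)
    (ℓ : ℝ → ℝ) (g : X → ℝ) : ℝ :=
  ∫ x, ∫ x', ℓ (g x - g x') ∂N ∂P

/-- The corrupted AUC risk `R_corr^ℓ(g) = E_{x~p_θ} E_{x'~p_θ'} [ℓ(g x − g x')]`. -/
noncomputable def corrRisk {X : Type*} [MeasurableSpace X] (P N : Measure X)
    (θ θ' : ℝ) (ℓ : ℝ → ℝ) (g : X → ℝ) : ℝ :=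
  ∫ x, ∫ x', ℓ (g x - g x') ∂(mix P N θ') ∂(mix P N θ)

/-- The empirical corrupted AUC risk on the samples `xs`, `ys`. -/
noncomputable def empCorrRisk {X : Type*} {nCP nCN : ℕ}
    (ℓ : ℝ → ℝ) (xs : Fin nCP → X) (ys : Fin nCN → X) (g : X → ℝ) : ℝ :=
  (1 / (nCP * nCN : ℝ)) * ∑ i : Fin nCP, ∑ j : Fin nCN, ℓ (g (xs i) - g (ys j))

section Helpers

variable {X : Type*} [MeasurableSpace X]
variable (ℓ : ℝ → ℝ) (K : ℝ)

lemma meas2 (hℓ : Measurable ℓ) {g : X → ℝ} (hg : Measurable g) :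
    Measurable (fun p : X × X => ℓ (g p.1 - g p.2)) :=
  hℓ.comp ((hg.comp measurable_fst).sub (hg.comp measurable_snd))

lemma intg_prod (hℓ : Measurable ℓ) (hbound : ∀ z : ℝ, ℓ z ∈ Set.Icc (0 : ℝ) K)
    {g : X → ℝ} (hg : Measurable g) (μ ν : Measure X) [IsFiniteMeasure μ] [IsFiniteMeasure ν] :
    Integrable (fun p : X × X => ℓ (g p.1 - g p.2)) (μ.prod ν) := by
  refine (integrable_const K).mono' (meas2 ℓ hℓ hg).aestronglyMeasurable ?_
  filter_upwards with p
  rw [Real.norm_eq_abs, abs_of_nonneg (hbound _).1]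
  exact (hbound _).2

lemma intI_inner (hℓ : Measurable ℓ) (hbound : ∀ z : ℝ, ℓ z ∈ Set.Icc (0 : ℝ) K)
    {g : X → ℝ} (hg : Measurable g) (c : ℝ) (ν : Measure X) [IsFiniteMeasure ν] :
    Integrable (fun x' => ℓ (c - g x')) ν := by
  refine (integrable_const K).mono' (hℓ.comp ((measurable_const.sub hg))).aestronglyMeasurable ?_
  filter_upwards with p
  rw [Real.norm_eq_abs, abs_of_nonneg (hbound _).1]
  exact (hbound _).2

lemma intg_outer (hℓ : Measurable ℓ) (hbound : ∀ z : ℝ, ℓ z ∈ Set.Icc (0 : ℝ) K)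
    {g : X → ℝ} (hg : Measurable g) (μ ν : Measure X) [IsFiniteMeasure μ] [IsFiniteMeasure ν]
    [IsProbabilityMeasure ν] :
    Integrable (fun x => ∫ x', ℓ (g x - g x') ∂ν) μ := by
  have hm : StronglyMeasurable (fun x => ∫ x', ℓ (g x - g x') ∂ν) :=
    (meas2 ℓ hℓ hg).stronglyMeasurable.integral_prod_right'
  refine (integrable_const K).mono' hm.aestronglyMeasurable ?_
  filter_upwards with x
  rw [Real.norm_eq_abs, abs_of_nonneg (integral_nonneg fun x' => (hbound _).1)]
  calc ∫ x', ℓ (g x - g x') ∂ν ≤ ∫ _, K ∂ν :=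
        integral_mono (intI_inner ℓ K hℓ hbound hg _ ν) (integrable_const K)
          (fun x' => (hbound _).2)
    _ = K := by simp

lemma integral_mix (P N : Measure X) [IsFiniteMeasure P] [IsFiniteMeasure N]
    (θ : ℝ) (h0 : 0 ≤ θ) (h1 : θ ≤ 1) (f : X → ℝ)
    (hfP : Integrable f P) (hfN : Integrable f N) :
    ∫ x, f x ∂(mix P N θ) = θ * ∫ x, f x ∂P + (1 - θ) * ∫ x, f x ∂N := by
  rw [mix, integral_add_measure (hfP.smul_measure (by simp)) (hfN.smul_measure (by simp)),
    integral_smul_measure, integral_smul_measure, ENNReal.toReal_ofReal h0,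
    ENNReal.toReal_ofReal (by linarith)]
  simp [smul_eq_mul]

end Helpers

section Core

variable {X : Type*} [MeasurableSpace X]
variable {ℓ : ℝ → ℝ} {K : ℝ}

lemma A_flip (hℓ : Measurable ℓ) (hbound : ∀ z : ℝ, ℓ z ∈ Set.Icc (0 : ℝ) K)
    (hsym : ∀ z : ℝ, ℓ z + ℓ (-z) = K)
    {g : X → ℝ} (hg : Measurable g) (μ ν : Measure X)
    [IsProbabilityMeasure μ] [IsProbabilityMeasure ν] :
    ∫ x, ∫ x', ℓ (g x - g x') ∂ν ∂μ = K - ∫ x, ∫ x', ℓ (g x - g x') ∂μ ∂ν := by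
  have hint := intg_prod ℓ K hℓ hbound hg μ ν
  have hswap := integral_integral_swap (f := fun x y => ℓ (g x - g y)) hint
  rw [hswap]
  have hflip : ∀ a b : ℝ, ℓ (a - b) = K - ℓ (b - a) := by
    intro a b
    have := hsym (b - a)
    rw [neg_sub] at this
    linarith
  have h1 : ∀ y : X, ∫ x, ℓ (g x - g y) ∂μ = K - ∫ x', ℓ (g y - g x') ∂μ := by
    intro y
    have he : (fun x => ℓ (g x - g y)) = fun x => K - ℓ (g y - g x) := by
      funext x; exact hflip _ _
    rw [he, integral_sub (integrable_const K) (intI_inner ℓ K hℓ hbound hg _ μ)]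
    simp
  calc ∫ y, ∫ x, ℓ (g x - g y) ∂μ ∂ν
      = ∫ y, (K - ∫ x', ℓ (g y - g x') ∂μ) ∂ν :=
        integral_congr_ae (Filter.Eventually.of_forall h1)
    _ = K - ∫ y, ∫ x', ℓ (g y - g x') ∂μ ∂ν := by
        rw [integral_sub (integrable_const K) (intg_outer ℓ K hℓ hbound hg ν μ)]
        simp

lemma corr_decomp (P N : Measure X) [IsProbabilityMeasure P] [IsProbabilityMeasure N]
    {θ θ' : ℝ} (hθ : θ ∈ Set.Icc (0 : ℝ) 1) (hθ' : θ' ∈ Set.Icc (0 : ℝ) 1)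
    (hℓ : Measurable ℓ) (hbound : ∀ z : ℝ, ℓ z ∈ Set.Icc (0 : ℝ) K)
    (hsym : ∀ z : ℝ, ℓ z + ℓ (-z) = K)
    {g : X → ℝ} (hg : Measurable g) :
    corrRisk P N θ θ' ℓ g = (θ - θ') * aucRisk P N ℓ g + K * (1 - (θ - θ')) / 2 := by
  obtain ⟨h0, h1⟩ := hθ
  obtain ⟨h0', h1'⟩ := hθ'
  set APN := aucRisk P N ℓ g with hAPN
  have hPP : ∫ x, ∫ x', ℓ (g x - g x') ∂P ∂P = K / 2 := by
    have := A_flip hℓ hbound hsym hg P P; linarith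
  have hNN : ∫ x, ∫ x', ℓ (g x - g x') ∂N ∂N = K / 2 := by
    have := A_flip hℓ hbound hsym hg N N; linarith
  have hNP : ∫ x, ∫ x', ℓ (g x - g x') ∂P ∂N = K - APN :=
    A_flip hℓ hbound hsym hg N P
  -- split inner integral
  have hinner : ∀ x : X, ∫ x', ℓ (g x - g x') ∂(mix P N θ') =
      θ' * ∫ x', ℓ (g x - g x') ∂P + (1 - θ') * ∫ x', ℓ (g x - g x') ∂N := fun x =>
    integral_mix P N θ' h0' h1' _ (intI_inner ℓ K hℓ hbound hg _ P)
      (intI_inner ℓ K hℓ hbound hg _ N)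
  have houter : ∀ (μ : Measure X) [IsProbabilityMeasure μ],
      ∫ x, (θ' * ∫ x', ℓ (g x - g x') ∂P + (1 - θ') * ∫ x', ℓ (g x - g x') ∂N) ∂μ =
      θ' * ∫ x, ∫ x', ℓ (g x - g x') ∂P ∂μ +
        (1 - θ') * ∫ x, ∫ x', ℓ (g x - g x') ∂N ∂μ := by
    intro μ _
    rw [integral_add ((intg_outer ℓ K hℓ hbound hg μ P).const_mul θ')
      ((intg_outer ℓ K hℓ hbound hg μ N).const_mul (1 - θ')),
      integral_const_mul, integral_const_mul]
  have hcorr : corrRisk P N θ θ' ℓ g =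
      θ * (θ' * (K / 2) + (1 - θ') * APN) +
      (1 - θ) * (θ' * (K - APN) + (1 - θ') * (K / 2)) := by
    rw [corrRisk]
    have hcongr : ∫ x, ∫ x', ℓ (g x - g x') ∂(mix P N θ') ∂(mix P N θ) =
        ∫ x, (θ' * ∫ x', ℓ (g x - g x') ∂P + (1 - θ') * ∫ x', ℓ (g x - g x') ∂N)
          ∂(mix P N θ) := integral_congr_ae (Filter.Eventually.of_forall hinner)
    have hi : ∀ (μ : Measure X) [IsProbabilityMeasure μ],
        Integrable (fun x => θ' * ∫ x', ℓ (g x - g x') ∂P +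
          (1 - θ') * ∫ x', ℓ (g x - g x') ∂N) μ := by
      intro μ _
      exact ((intg_outer ℓ K hℓ hbound hg μ P).const_mul θ').add
        ((intg_outer ℓ K hℓ hbound hg μ N).const_mul (1 - θ'))
    rw [hcongr, integral_mix P N θ h0 h1 _ (hi P) (hi N),
      houter P, houter N, hPP, hNN, hNP]
    rfl
  rw [hcorr]; ring

end Core

/-- Lemma 1 (relation between the estimation error of the clean AUC risk and the uniform
deviation of the corrupted AUC risk): if `ĝ ∈ G` minimizes the empirical corrupted AUC risk,
`g* ∈ G` minimizes the clean AUC risk, and the uniform deviation is finite, then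
`R_AUC(ĝ) − R_AUC(g*) ≤ (2/(θ − θ'))·sup_{g ∈ G} |R_corr(g) − R̂_corr(g)|`. -/
theorem estimation_error_via_uniform_deviation
    {X : Type*} [MeasurableSpace X] (P N : Measure X)
    [IsProbabilityMeasure P] [IsProbabilityMeasure N]
    (θ θ' : ℝ) (hθ : θ ∈ Set.Icc (0 : ℝ) 1) (hθ' : θ' ∈ Set.Icc (0 : ℝ) 1)
    (hθθ' : θ' < θ)
    (ℓ : ℝ → ℝ) (hℓ : Measurable ℓ) (K : ℝ) (hK : 0 < K)
    (hsym : ∀ z : ℝ, ℓ z + ℓ (-z) = K)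
    (hbound : ∀ z : ℝ, ℓ z ∈ Set.Icc (0 : ℝ) K)
    (G : Set (X → ℝ)) (hGne : G.Nonempty) (hGmeas : ∀ g ∈ G, Measurable g)
    {nCP nCN : ℕ} (hnCP : 0 < nCP) (hnCN : 0 < nCN)
    (xs : Fin nCP → X) (ys : Fin nCN → X)
    (ghat : X → ℝ) (hghatG : ghat ∈ G)
    (hghat : ∀ g ∈ G, empCorrRisk ℓ xs ys ghat ≤ empCorrRisk ℓ xs ys g)
    (gstar : X → ℝ) (hgstarG : gstar ∈ G)
    (hgstar : ∀ g ∈ G, aucRisk P N ℓ gstar ≤ aucRisk P N ℓ g)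
    (hbdd : BddAbove
      ((fun g => |corrRisk P N θ θ' ℓ g - empCorrRisk ℓ xs ys g|) '' G)) :
    aucRisk P N ℓ ghat - aucRisk P N ℓ gstar ≤
      (2 / (θ - θ')) *
        sSup ((fun g => |corrRisk P N θ θ' ℓ g - empCorrRisk ℓ xs ys g|) '' G) := by
  set S := sSup ((fun g => |corrRisk P N θ θ' ℓ g - empCorrRisk ℓ xs ys g|) '' G) with hS
  have hS1 : |corrRisk P N θ θ' ℓ ghat - empCorrRisk ℓ xs ys ghat| ≤ S :=
    le_csSup hbdd ⟨ghat, hghatG, rfl⟩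
  have hS2 : |corrRisk P N θ θ' ℓ gstar - empCorrRisk ℓ xs ys gstar| ≤ S :=
    le_csSup hbdd ⟨gstar, hgstarG, rfl⟩
  have hEmp : empCorrRisk ℓ xs ys ghat ≤ empCorrRisk ℓ xs ys gstar := hghat gstar hgstarG
  have hd1 := corr_decomp P N hθ hθ' hℓ hbound hsym (hGmeas ghat hghatG)
  have hd2 := corr_decomp P N hθ hθ' hℓ hbound hsym (hGmeas gstar hgstarG)
  have habs1 := abs_le.mp hS1
  have habs2 := abs_le.mp hS2
  have hkey : (θ - θ') * (aucRisk P N ℓ ghat - aucRisk P N ℓ gstar) ≤ 2 * S := by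
    nlinarith [hd1, hd2]
  have hpos : (0 : ℝ) < θ - θ' := sub_pos.2 hθθ'
  rw [div_mul_eq_mul_div, le_div_iff₀ hpos]
  calc (aucRisk P N ℓ ghat - aucRisk P N ℓ gstar) * (θ - θ')
      = (θ - θ') * (aucRisk P N ℓ ghat - aucRisk P N ℓ gstar) := mul_comm _ _
    _ ≤ 2 * S := hkey
end

section
/- Let X be a measurable space, θ, θ' ∈ [0,1] with θ > θ', and let ℓ_sym be a measurable symmetric loss with constant K > 0 taking values in [0,K]. Let G be a nonempty class of measurable functions g : X → ℝ. Suppose g* ∈ G minimizes the clean AUC risk R_AUC^{ℓ_sym} over G. Then g* also minimizes the corrupted AUC risk R_corr^{ℓ_sym} over G, and conversely any minimizer of R_corr^{ℓ_sym} over G minimizes R_AUC^{ℓ_sym} over G; i.e., since R_corr^{ℓ_sym}(g) = (θ − θ')·R_AUC^{ℓ_sym}(g) + K(1 − θ + θ')/2 with θ − θ' > 0, the sets of minimizers of the two risks over G coincide. -/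
open MeasureTheory

section Aux

lemma aux_integrable_of_bdd {α : Type*} [MeasurableSpace α] (μ : Measure α) [IsFiniteMeasure μ]
    {K : ℝ} {f : α → ℝ} (hf : Measurable f) (hb : ∀ a, f a ∈ Set.Icc (0:ℝ) K) :
    Integrable f μ :=
  (integrable_const K).mono' hf.aestronglyMeasurable
    (Filter.Eventually.of_forall fun a => by
      rw [Real.norm_eq_abs, abs_of_nonneg (hb a).1]; exact (hb a).2)

variable {X : Type*} [MeasurableSpace X] {ℓ : ℝ → ℝ} {K : ℝ}

lemma aux_inner_integrable (hℓ : Measurable ℓ) (hbound : ∀ z : ℝ, ℓ z ∈ Set.Icc (0:ℝ) K)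
    {g : X → ℝ} (hg : Measurable g) (x : X) (ν : Measure X) [IsFiniteMeasure ν] :
    Integrable (fun x' => ℓ (g x - g x')) ν :=
  aux_integrable_of_bdd ν (hℓ.comp ((measurable_const).sub hg)) (fun _ => hbound _)

lemma aux_inner_integrable' (hℓ : Measurable ℓ) (hbound : ∀ z : ℝ, ℓ z ∈ Set.Icc (0:ℝ) K)
    {g : X → ℝ} (hg : Measurable g) (x : X) (ν : Measure X) [IsFiniteMeasure ν] :
    Integrable (fun x' => ℓ (g x' - g x)) ν :=
  aux_integrable_of_bdd ν (hℓ.comp (hg.sub measurable_const)) (fun _ => hbound _)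

lemma aux_F_meas (hℓ : Measurable ℓ) {g : X → ℝ} (hg : Measurable g)
    (ν : Measure X) [SFinite ν] :
    StronglyMeasurable (fun x => ∫ x', ℓ (g x - g x') ∂ν) := by
  exact ((hℓ.comp ((hg.comp measurable_fst).sub (hg.comp measurable_snd)))).stronglyMeasurable.integral_prod_right'

lemma aux_F_bdd (hK : 0 < K) (hbound : ∀ z : ℝ, ℓ z ∈ Set.Icc (0:ℝ) K)
    (hℓ : Measurable ℓ) {g : X → ℝ} (hg : Measurable g)
    (ν : Measure X) [IsProbabilityMeasure ν] (x : X) :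
    (∫ x', ℓ (g x - g x') ∂ν) ∈ Set.Icc (0:ℝ) K := by
  constructor
  · exact integral_nonneg fun x' => (hbound _).1
  · calc (∫ x', ℓ (g x - g x') ∂ν) ≤ ∫ _x', K ∂ν :=
          integral_mono (aux_inner_integrable hℓ hbound hg x ν) (integrable_const K)
            (fun x' => (hbound _).2)
      _ = K := by simp

lemma aux_F_integrable (hK : 0 < K) (hbound : ∀ z : ℝ, ℓ z ∈ Set.Icc (0:ℝ) K)
    (hℓ : Measurable ℓ) {g : X → ℝ} (hg : Measurable g)
    (ν μ : Measure X) [IsProbabilityMeasure ν] [IsProbabilityMeasure μ] :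
    Integrable (fun x => ∫ x', ℓ (g x - g x') ∂ν) μ :=
  aux_integrable_of_bdd μ (aux_F_meas hℓ hg ν).measurable
    (fun x => aux_F_bdd hK hbound hℓ hg ν x)

/-- symmetry: the two crossed double integrals sum to `K`. -/
lemma aux_double_add (hℓ : Measurable ℓ) (hK : 0 < K)
    (hsym : ∀ z : ℝ, ℓ z + ℓ (-z) = K) (hbound : ∀ z : ℝ, ℓ z ∈ Set.Icc (0:ℝ) K)
    (μ ν : Measure X) [IsProbabilityMeasure μ] [IsProbabilityMeasure ν]
    {g : X → ℝ} (hg : Measurable g) :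
    (∫ x, ∫ x', ℓ (g x - g x') ∂ν ∂μ) + (∫ x, ∫ x', ℓ (g x - g x') ∂μ ∂ν) = K := by
  have hint : Integrable (Function.uncurry fun x y => ℓ (g y - g x)) (μ.prod ν) :=
    aux_integrable_of_bdd _
      (hℓ.comp ((hg.comp measurable_snd).sub (hg.comp measurable_fst)))
      (fun _ => hbound _)
  have hswap : (∫ x, ∫ x', ℓ (g x - g x') ∂μ ∂ν)
      = ∫ x, ∫ x', ℓ (g x' - g x) ∂ν ∂μ := (integral_integral_swap hint).symm
  rw [hswap]
  have hF1 : Integrable (fun x => ∫ x', ℓ (g x - g x') ∂ν) μ :=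
    aux_F_integrable hK hbound hℓ hg ν μ
  have hF2 : Integrable (fun x => ∫ x', ℓ (g x' - g x) ∂ν) μ := by
    apply aux_integrable_of_bdd μ (K := K)
    · exact ((hℓ.comp ((hg.comp measurable_snd).sub (hg.comp measurable_fst)))).stronglyMeasurable.integral_prod_right'.measurable
    · intro x
      constructor
      · exact integral_nonneg fun x' => (hbound _).1
      · calc (∫ x', ℓ (g x' - g x) ∂ν) ≤ ∫ _x', K ∂ν :=
              integral_mono (aux_inner_integrable' hℓ hbound hg x ν) (integrable_const K)
                (fun x' => (hbound _).2)
          _ = K := by simp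
  rw [← integral_add hF1 hF2]
  have hinner : ∀ x, (∫ x', ℓ (g x - g x') ∂ν) + (∫ x', ℓ (g x' - g x) ∂ν) = K := by
    intro x
    rw [← integral_add (aux_inner_integrable hℓ hbound hg x ν)
        (aux_inner_integrable' hℓ hbound hg x ν)]
    have : (fun x' => ℓ (g x - g x') + ℓ (g x' - g x)) = fun _ => K := by
      funext x'
      have := hsym (g x - g x')
      rwa [neg_sub] at this
    rw [this]
    simp
  simp only [hinner]
  simp

lemma aux_double_self (hℓ : Measurable ℓ) (hK : 0 < K)
    (hsym : ∀ z : ℝ, ℓ z + ℓ (-z) = K) (hbound : ∀ z : ℝ, ℓ z ∈ Set.Icc (0:ℝ) K)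
    (μ : Measure X) [IsProbabilityMeasure μ] {g : X → ℝ} (hg : Measurable g) :
    (∫ x, ∫ x', ℓ (g x - g x') ∂μ ∂μ) = K / 2 := by
  have := aux_double_add hℓ hK hsym hbound μ μ hg
  linarith

lemma aux_integral_mix (P N : Measure X) [IsFiniteMeasure P] [IsFiniteMeasure N]
    {θ : ℝ} (h0 : 0 ≤ θ) (h1 : θ ≤ 1) {f : X → ℝ}
    (hfP : Integrable f P) (hfN : Integrable f N) :
    ∫ x, f x ∂(mix P N θ) = θ * ∫ x, f x ∂P + (1 - θ) * ∫ x, f x ∂N := by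
  unfold mix
  rw [integral_add_measure (hfP.smul_measure ENNReal.ofReal_ne_top)
      (hfN.smul_measure ENNReal.ofReal_ne_top),
    integral_smul_measure, integral_smul_measure,
    ENNReal.toReal_ofReal h0, ENNReal.toReal_ofReal (by linarith)]
  simp only [smul_eq_mul]

/-- key affine identity. -/
lemma aux_corr_eq (P N : Measure X) [IsProbabilityMeasure P] [IsProbabilityMeasure N]
    {θ θ' : ℝ} (hθ : θ ∈ Set.Icc (0:ℝ) 1) (hθ' : θ' ∈ Set.Icc (0:ℝ) 1)
    (hℓ : Measurable ℓ) (hK : 0 < K)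
    (hsym : ∀ z : ℝ, ℓ z + ℓ (-z) = K) (hbound : ∀ z : ℝ, ℓ z ∈ Set.Icc (0:ℝ) K)
    {g : X → ℝ} (hg : Measurable g) :
    corrRisk P N θ θ' ℓ g = (θ - θ') * aucRisk P N ℓ g + K * (1 - θ + θ') / 2 := by
  obtain ⟨hθ0, hθ1⟩ := hθ
  obtain ⟨hθ'0, hθ'1⟩ := hθ'
  set FP : X → ℝ := fun x => ∫ x', ℓ (g x - g x') ∂P with hFP
  set FN : X → ℝ := fun x => ∫ x', ℓ (g x - g x') ∂N with hFN
  have hFPint : ∀ (μ : Measure X) [IsProbabilityMeasure μ], Integrable FP μ :=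
    fun μ _ => aux_F_integrable hK hbound hℓ hg P μ
  have hFNint : ∀ (μ : Measure X) [IsProbabilityMeasure μ], Integrable FN μ :=
    fun μ _ => aux_F_integrable hK hbound hℓ hg N μ
  have hinner : (fun x => ∫ x', ℓ (g x - g x') ∂(mix P N θ'))
      = fun x => θ' * FP x + (1 - θ') * FN x := by
    funext x
    exact aux_integral_mix P N hθ'0 hθ'1
      (aux_inner_integrable hℓ hbound hg x P) (aux_inner_integrable hℓ hbound hg x N)
  have hcomb : ∀ (μ : Measure X) [IsProbabilityMeasure μ],
      Integrable (fun x => θ' * FP x + (1 - θ') * FN x) μ :=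
    fun μ _ => ((hFPint μ).const_mul θ').add ((hFNint μ).const_mul (1 - θ'))
  have hsplit : ∀ (μ : Measure X) [IsProbabilityMeasure μ],
      ∫ x, (θ' * FP x + (1 - θ') * FN x) ∂μ
        = θ' * (∫ x, FP x ∂μ) + (1 - θ') * (∫ x, FN x ∂μ) := by
    intro μ _
    rw [integral_add ((hFPint μ).const_mul θ') ((hFNint μ).const_mul (1 - θ')),
      integral_const_mul, integral_const_mul]
  have hBP : ∫ x, FP x ∂P = K / 2 := aux_double_self hℓ hK hsym hbound P hg
  have hCN : ∫ x, FN x ∂N = K / 2 := aux_double_self hℓ hK hsym hbound N hg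
  have hAD : (∫ x, FN x ∂P) + (∫ x, FP x ∂N) = K :=
    aux_double_add hℓ hK hsym hbound P N hg
  have hA : ∫ x, FN x ∂P = aucRisk P N ℓ g := rfl
  rw [corrRisk, hinner,
    aux_integral_mix P N hθ0 hθ1 (hcomb P) (hcomb N), hsplit P, hsplit N,
    hBP, hCN, hA]
  have hD : ∫ x, FP x ∂N = K - aucRisk P N ℓ g := by rw [← hA]; linarith
  rw [hD]
  ring

end Aux

/-- For a symmetric loss bounded in `[0,K]` and `θ > θ'`, the minimizers over `G` of the
clean AUC risk and of the corrupted AUC risk coincide: a hypothesis `h ∈ G` minimizes the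
clean AUC risk over `G` if and only if it minimizes the corrupted AUC risk over `G`. -/
theorem clean_and_corrupted_auc_minimizers_coincide
    {X : Type*} [MeasurableSpace X] (P N : Measure X)
    [IsProbabilityMeasure P] [IsProbabilityMeasure N]
    (θ θ' : ℝ) (hθ : θ ∈ Set.Icc (0 : ℝ) 1) (hθ' : θ' ∈ Set.Icc (0 : ℝ) 1)
    (hθθ' : θ' < θ)
    (ℓ : ℝ → ℝ) (hℓ : Measurable ℓ) (K : ℝ) (hK : 0 < K)
    (hsym : ∀ z : ℝ, ℓ z + ℓ (-z) = K)
    (hbound : ∀ z : ℝ, ℓ z ∈ Set.Icc (0 : ℝ) K)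
    (G : Set (X → ℝ)) (hGne : G.Nonempty) (hGmeas : ∀ g ∈ G, Measurable g) :
    ∀ h ∈ G,
      ((∀ g ∈ G, aucRisk P N ℓ h ≤ aucRisk P N ℓ g) ↔
        (∀ g ∈ G, corrRisk P N θ θ' ℓ h ≤ corrRisk P N θ θ' ℓ g)) := by
  have key : ∀ g ∈ G,
      corrRisk P N θ θ' ℓ g = (θ - θ') * aucRisk P N ℓ g + K * (1 - θ + θ') / 2 :=
    fun g hg => aux_corr_eq P N hθ hθ' hℓ hK hsym hbound (hGmeas g hg)
  intro h hG
  constructor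
  · intro hmin g hg
    rw [key h hG, key g hg]
    have := hmin g hg
    nlinarith
  · intro hmin g hg
    have := hmin g hg
    rw [key h hG, key g hg] at this
    nlinarith
end
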